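/- Let S and r be parameters with 0 < S < 4r, and let u₀ be the standing wave. Set c(x) = (2S²/r)(2u₀(x)−1)·f(u₀(x)) + S·f'(u₀(x)). Then for every twice continuously differentiable function h : ℝ → ℝ and every x ∈ ℝ, (Lh)(x) = e^{−(2S/r)(u₀(x)² − u₀(x))} · [ k''(x) + c(x)·k(x) ], where k(x) := h(x)·e^{(2S/r)(u₀(x)² − u₀(x))}. -/

import Mathlib

open Real Filter Topology

noncomputable def fpoly (u : ℝ) : ℝ := u * (2 * u - 1) * (1 - u)

noncomputable def Lop (S r : ℝ) (u₀ h : ℝ → ℝ) : ℝ → ℝ := fun x =>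
  deriv (deriv h) x + (4 * S / r) * deriv u₀ x * (2 * u₀ x - 1) * deriv h x
    + S * (deriv fpoly (u₀ x) + (4 / r) * (deriv u₀ x) ^ 2) * h x

theorem conjugation_identity (S r : ℝ) (hS : 0 < S) (hSr : S < 4 * r)
    (u₀ : ℝ → ℝ) (hu : ContDiff ℝ 2 u₀)
    (hode : ∀ x : ℝ, deriv (deriv u₀) x + S * fpoly (u₀ x)
      + (2 * S / r) * (2 * u₀ x - 1) * (deriv u₀ x) ^ 2 = 0)
    (hlim1 : Tendsto u₀ atBot (𝓝 1)) (hlim0 : Tendsto u₀ atTop (𝓝 0))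
    (hnorm : u₀ 0 = 1 / 2) (hmono : StrictAnti u₀)
    (hbound : ∀ x : ℝ, 0 < u₀ x ∧ u₀ x < 1)
    (h : ℝ → ℝ) (hh : ContDiff ℝ 2 h) (x : ℝ) :
    Lop S r u₀ h x = Real.exp (-(2 * S / r) * ((u₀ x) ^ 2 - u₀ x)) *
      (deriv (deriv (fun y => h y * Real.exp ((2 * S / r) * ((u₀ y) ^ 2 - u₀ y)))) x
        + ((2 * S ^ 2 / r) * (2 * u₀ x - 1) * fpoly (u₀ x) + S * deriv fpoly (u₀ x)) *
          (h x * Real.exp ((2 * S / r) * ((u₀ x) ^ 2 - u₀ x)))) := by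
  have hr : r ≠ 0 := by nlinarith
  set a : ℝ := 2 * S / r with ha
  -- differentiability facts
  have hu2 : ContDiff ℝ (1 + 1 : ℕ) u₀ := by norm_num at hu ⊢; exact hu
  have hh2 : ContDiff ℝ (1 + 1 : ℕ) h := by norm_num at hh ⊢; exact hh
  have hu1 : Differentiable ℝ u₀ := hu2.differentiable (by norm_num)
  have hh1 : Differentiable ℝ h := hh2.differentiable (by norm_num)
  have hdu : Differentiable ℝ (deriv u₀) :=
    (contDiff_succ_iff_deriv.mp (show ContDiff ℝ ((1:ℕ∞)+1) u₀ by exact_mod_cast hu2)).2.2.differentiable (by norm_num)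
  have hdh : Differentiable ℝ (deriv h) :=
    (contDiff_succ_iff_deriv.mp (show ContDiff ℝ ((1:ℕ∞)+1) h by exact_mod_cast hh2)).2.2.differentiable (by norm_num)
  have hu₀d : ∀ y, HasDerivAt u₀ (deriv u₀ y) y := fun y => (hu1 y).hasDerivAt
  have hhd : ∀ y, HasDerivAt h (deriv h y) y := fun y => (hh1 y).hasDerivAt
  have hdud : ∀ y, HasDerivAt (deriv u₀) (deriv (deriv u₀) y) y := fun y => (hdu y).hasDerivAt
  have hdhd : ∀ y, HasDerivAt (deriv h) (deriv (deriv h) y) y := fun y => (hdh y).hasDerivAt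
  set φ : ℝ → ℝ := fun y => a * ((u₀ y) ^ 2 - u₀ y) with hφ
  set g : ℝ → ℝ := fun y => Real.exp (φ y) with hg
  have hφd : ∀ y, HasDerivAt φ (a * (2 * u₀ y - 1) * deriv u₀ y) y := by
    intro y
    have h1 : HasDerivAt (fun y => (u₀ y) ^ 2 - u₀ y)
        (2 * u₀ y ^ 1 * deriv u₀ y - deriv u₀ y) y := ((hu₀d y).pow 2).sub (hu₀d y)
    have := h1.const_mul a
    exact this.congr_deriv (by ring)
  have hgd : ∀ y, HasDerivAt g (a * (2 * u₀ y - 1) * deriv u₀ y * g y) y := by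
    intro y
    have := (hφd y).exp
    convert this using 1; simp [hg]; ring
  have hkd : ∀ y, HasDerivAt (fun y => h y * g y)
      (deriv h y * g y + h y * (a * (2 * u₀ y - 1) * deriv u₀ y * g y)) y :=
    fun y => (hhd y).mul (hgd y)
  have hderiv_k : deriv (fun y => h y * g y) =
      fun y => deriv h y * g y + h y * (a * (2 * u₀ y - 1) * deriv u₀ y * g y) := by
    funext y; exact (hkd y).deriv
  -- second derivative
  have hk2 : HasDerivAt (fun y => deriv h y * g y + h y * (a * (2 * u₀ y - 1) * deriv u₀ y * g y))
      ((deriv (deriv h) x * g x + deriv h x * (a * (2 * u₀ x - 1) * deriv u₀ x * g x))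
        + (deriv h x * (a * (2 * u₀ x - 1) * deriv u₀ x * g x)
          + h x * ((a * (2 * (deriv u₀ x) * deriv u₀ x + (2 * u₀ x - 1) * deriv (deriv u₀) x)) * g x
            + (a * (2 * u₀ x - 1) * deriv u₀ x) * (a * (2 * u₀ x - 1) * deriv u₀ x * g x)))) x := by
    have hA : HasDerivAt (fun y => deriv h y * g y)
        (deriv (deriv h) x * g x + deriv h x * (a * (2 * u₀ x - 1) * deriv u₀ x * g x)) x :=
      (hdhd x).mul (hgd x)
    have hw : HasDerivAt (fun y => a * (2 * u₀ y - 1) * deriv u₀ y)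
        (a * (2 * (deriv u₀ x) * deriv u₀ x + (2 * u₀ x - 1) * deriv (deriv u₀) x)) x := by
      have h1 : HasDerivAt (fun y => (2 * u₀ y - 1)) (2 * deriv u₀ x) x :=
        ((hu₀d x).const_mul 2).sub_const 1
      have hq : HasDerivAt (fun y => a * (2 * u₀ y - 1)) (a * (2 * deriv u₀ x)) x :=
        h1.const_mul a
      have h2 := hq.mul (hdud x)
      exact h2.congr_deriv (by ring)
    have hB : HasDerivAt (fun y => h y * (a * (2 * u₀ y - 1) * deriv u₀ y * g y))
        (deriv h x * (a * (2 * u₀ x - 1) * deriv u₀ x * g x)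
          + h x * ((a * (2 * (deriv u₀ x) * deriv u₀ x + (2 * u₀ x - 1) * deriv (deriv u₀) x)) * g x
            + (a * (2 * u₀ x - 1) * deriv u₀ x) * (a * (2 * u₀ x - 1) * deriv u₀ x * g x))) x :=
      (hhd x).mul (hw.mul (hgd x))
    exact hA.add hB
  have hd2k : deriv (deriv (fun y => h y * g y)) x =
      (deriv (deriv h) x * g x + deriv h x * (a * (2 * u₀ x - 1) * deriv u₀ x * g x))
        + (deriv h x * (a * (2 * u₀ x - 1) * deriv u₀ x * g x)
          + h x * ((a * (2 * (deriv u₀ x) * deriv u₀ x + (2 * u₀ x - 1) * deriv (deriv u₀) x)) * g x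
            + (a * (2 * u₀ x - 1) * deriv u₀ x) * (a * (2 * u₀ x - 1) * deriv u₀ x * g x))) := by
    rw [hderiv_k]; exact hk2.deriv
  -- rewrite goal
  have hgoal : (fun y => h y * Real.exp ((2 * S / r) * ((u₀ y) ^ 2 - u₀ y))) = fun y => h y * g y := by
    funext y; simp [hg, hφ, ha]
  rw [hgoal, hd2k]
  have hexp : Real.exp (-(2 * S / r) * ((u₀ x) ^ 2 - u₀ x)) = (g x)⁻¹ := by
    rw [hg]; simp [hφ, ha, Real.exp_neg]
  have hgx : Real.exp ((2 * S / r) * ((u₀ x) ^ 2 - u₀ x)) = g x := by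
    rw [hg]
  rw [hexp, hgx]
  have hgne : g x ≠ 0 := Real.exp_ne_zero _
  have hd2u : deriv (deriv u₀) x = -(S * fpoly (u₀ x)) - (2 * S / r) * (2 * u₀ x - 1) * (deriv u₀ x) ^ 2 := by
    have := hode x; linarith
  rw [Lop, hd2u, ha]
  field_simp
  ring
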